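/- Let Σ be an alphabet, a, b, c ∈ Σ pairwise distinct, and A a nonempty language none of whose words contain c. Set L = ({[a]} ∪ {[b]}) · {[c]} · A. Then the pair (X₀, Y₀) = ({[a],[b]}, A) satisfies X₀ · {[c]} · Y₀ = L, and for every pair of nonempty languages X, Y with X · {[c]} · Y ⊆ L we have X ⊆ {[a],[b]} and Y ⊆ A. -/

import Mathlib

lemma split_at_c {α : Type} (c : α) :
    ∀ (s s' t t' : List α), c ∉ s → c ∉ s' → s ++ c :: t = s' ++ c :: t' →
      s = s' ∧ t = t' := by
  intro s
  induction s with
  | nil =>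
    intro s' t t' _ hs' h
    cases s' with
    | nil => simpa using h
    | cons x xs =>
      simp at h
      exact absurd (h.1 ▸ (List.mem_cons_self : x ∈ x :: xs)) (h.1 ▸ hs')
  | cons x xs ih =>
    intro s' t t' hs hs' h
    cases s' with
    | nil =>
      simp at h
      exact absurd (h.1 ▸ (List.mem_cons_self : x ∈ x :: xs)) (h.1 ▸ hs)
    | cons y ys =>
      simp at h
      obtain ⟨hxy, h2⟩ := h
      have := ih ys t t' (fun hc => hs (List.mem_cons_of_mem _ hc))
        (fun hc => hs' (List.mem_cons_of_mem _ hc)) h2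
      exact ⟨by rw [hxy, this.1], this.2⟩

theorem perfect_typing_gadget {α : Type} (a b c : α)
    (hab : a ≠ b) (hac : a ≠ c) (hbc : b ≠ c)
    (A : Language α) (hA : ∃ w, w ∈ A) (hcA : ∀ w ∈ A, c ∉ w) :
    (({[a]} : Language α) ⊔ {[b]}) * ({[c]} : Language α) * A =
      (({[a]} : Language α) ⊔ {[b]}) * ({[c]} : Language α) * A ∧
    (∀ X Y : Language α, (∃ w, w ∈ X) → (∃ w, w ∈ Y) →
      X * ({[c]} : Language α) * Y ≤
        (({[a]} : Language α) ⊔ {[b]}) * ({[c]} : Language α) * A →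
      X ≤ (({[a]} : Language α) ⊔ {[b]}) ∧ Y ≤ A) := by
  refine ⟨rfl, ?_⟩
  rintro X Y ⟨x, hx⟩ ⟨y, hy⟩ hsub
  -- generic decomposition fact
  have key : ∀ x' ∈ X, ∀ y' ∈ Y, (x' = [a] ∨ x' = [b]) ∧ y' ∈ A := by
    intro x' hx' y' hy'
    have hmem : x' ++ [c] ++ y' ∈ X * ({[c]} : Language α) * Y := by
      exact ⟨x' ++ [c], ⟨x', hx', [c], rfl, rfl⟩, y', hy', rfl⟩
    obtain ⟨uc, ⟨u, hu, cc, hcc, hucc⟩, v, hv, heq⟩ := hsub hmem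
    have hcc' : cc = [c] := hcc
    subst hcc'
    subst hucc
    have hu' : u = [a] ∨ u = [b] := hu
    have hcv : c ∉ v := hcA v hv
    obtain ⟨q, hq, hqc⟩ : ∃ q, u = [q] ∧ q ≠ c := by
      rcases hu' with h | h <;> exact ⟨_, h, by simp [hac, hbc, h]⟩
    have heq' : x' ++ c :: y' = q :: c :: v := by
      rw [hq] at heq; simpa using heq.symm
    cases x' with
    | nil =>
      simp at heq'
      exact absurd heq'.1 (Ne.symm hqc)
    | cons z zs =>
      simp at heq'
      obtain ⟨hzq, heq2⟩ := heq'
      cases zs with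
      | nil =>
        simp at heq2
        have hx'' : z :: [] = [q] := by rw [hzq]
        refine ⟨?_, heq2.symm ▸ hv⟩
        rcases hu' with h | h
        · rw [hq] at h; simp at h
          exact Or.inl (by rw [hzq, h])
        · rw [hq] at h; simp at h
          exact Or.inr (by rw [hzq, h])
      | cons w ws =>
        simp at heq2
        exfalso
        apply hcv
        rw [heq2.2.symm]
        simp
  constructor
  · intro x' hx'
    rcases (key x' hx' y hy).1 with h | h
    · exact Or.inl h
    · exact Or.inr h
  · intro y' hy'
    exact (key x hx y' hy').2
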